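/- Let ξ > 0 and set x₀ = √(1 + ξ²) − ξ. Let u₁, u₂ : [0,∞) → [−1,1] be measurable and let (r₁, r₂) : [0,∞) → ℝ² be absolutely continuous with ṙ₁ = −ξ u₁² r₁ − u₁u₂ r₂ and ṙ₂ = u₁u₂ r₁ − ξ u₂² r₂ almost everywhere. Then the function t ↦ r₂(t)² + x₀² r₁(t)² is nonincreasing (its a.e. derivative equals −2ξ (x₀ u₁ r₁ − u₂ r₂)² ≤ 0). In particular, if (r₁(0), r₂(0)) = (1, 0), then r₂(t)² + x₀² r₁(t)² ≤ x₀² for all t ≥ 0, so r₂(t) ≤ x₀ = √(1 + ξ²) − ξ for all t ≥ 0. -/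

import Mathlib

open MeasureTheory

open MeasureTheory Set Filter Metric Topology

-- A.e. fundamental theorem of calculus via Lebesgue differentiation
lemma ae_hasDerivAt_primitive {f : ℝ → ℝ} (hf : LocallyIntegrable f volume) :
    ∀ᵐ x ∂(volume : Measure ℝ),
      HasDerivAt (fun t => ∫ s in x..t, f s) (f x) x := by
  filter_upwards [IsUnifLocDoublingMeasure.ae_tendsto_average_norm_sub (μ := volume) hf 1] with x hx
  have hδ : Tendsto (fun t : ℝ => |t - x|) (𝓝[≠] x) (𝓝[>] 0) := by
    rw [tendsto_nhdsWithin_iff]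
    constructor
    · have : Tendsto (fun t : ℝ => |t - x|) (𝓝 x) (𝓝 0) := by
        have h := ((continuous_id.sub (continuous_const (y := x))).abs).tendsto x
        simpa using h
      exact this.mono_left nhdsWithin_le_nhds
    · filter_upwards [self_mem_nhdsWithin] with t ht
      simp only [Set.mem_Ioi, abs_pos, sub_ne_zero]
      exact ht
  have hmem : ∀ᶠ t : ℝ in 𝓝[≠] x, x ∈ closedBall x (1 * |t - x|) := by
    filter_upwards with t
    exact Metric.mem_closedBall_self (by positivity)
  have havg : Tendsto (fun t : ℝ => ⨍ y in closedBall x |t - x|, ‖f y - f x‖)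
      (𝓝[≠] x) (𝓝 0) := hx (fun _ => x) (fun t => |t - x|) hδ hmem
  rw [hasDerivAt_iff_isLittleO, Asymptotics.isLittleO_iff]
  intro ε hε
  have h2 : ∀ᶠ t in 𝓝[≠] x,
      (⨍ y in closedBall x |t - x|, ‖f y - f x‖) ≤ ε / 2 := by
    have := Metric.tendsto_nhds.mp havg (ε / 2) (by positivity)
    filter_upwards [this] with t ht
    have h' : |(⨍ y in closedBall x |t - x|, ‖f y - f x‖) - 0| < ε / 2 := by
      simpa [Real.dist_eq] using ht
    calc (⨍ y in closedBall x |t - x|, ‖f y - f x‖)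
        ≤ |(⨍ y in closedBall x |t - x|, ‖f y - f x‖) - 0| := by
          rw [sub_zero]; exact le_abs_self _
      _ ≤ ε / 2 := h'.le
  rw [← nhdsNE_sup_pure, eventually_sup]
  constructor
  · filter_upwards [h2, self_mem_nhdsWithin] with t havg2 htx
    have htx' : t ≠ x := htx
    have hr : 0 < |t - x| := by
      rw [abs_pos, sub_ne_zero]; exact htx'
    have hint : IntervalIntegrable f volume x t :=
      (hf.integrableOn_isCompact isCompact_uIcc).intervalIntegrable
    have hintc : IntervalIntegrable (fun _ => f x) volume x t := intervalIntegrable_const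
    have key1 : (∫ s in x..t, f s) - (∫ s in x..x, f s) - (t - x) • f x
        = ∫ s in x..t, (f s - f x) := by
      rw [intervalIntegral.integral_same, intervalIntegral.integral_sub hint hintc,
        intervalIntegral.integral_const]
      ring_nf
    rw [key1]
    have hsub : Set.uIoc x t ⊆ closedBall x |t - x| := by
      intro y hy
      rw [Real.closedBall_eq_Icc]
      rw [Set.mem_Icc]
      rcases Set.mem_uIoc.mp hy with ⟨h1, h2⟩ | ⟨h1, h2⟩ <;>
        constructor <;>
        nlinarith [le_abs_self (t - x), neg_abs_le (t - x)]
    have hintB : IntegrableOn (fun s => ‖f s - f x‖) (closedBall x |t - x|) volume :=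
      ((hf.sub (locallyIntegrable_const (f x))).integrableOn_isCompact
        (isCompact_closedBall x |t - x|)).norm
    have step1 : ‖∫ s in x..t, (f s - f x)‖ ≤ ∫ s in Set.uIoc x t, ‖f s - f x‖ := by
      rw [intervalIntegral.norm_intervalIntegral_eq]
      exact norm_integral_le_integral_norm _
    have step2 : ∫ s in Set.uIoc x t, ‖f s - f x‖ ≤ ∫ s in closedBall x |t - x|, ‖f s - f x‖ := by
      apply setIntegral_mono_set hintB
      · filter_upwards with s; positivity
      · exact HasSubset.Subset.eventuallyLE hsub
    have hvol : (volume (closedBall x |t - x|)).toReal = 2 * |t - x| := by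
      rw [Real.volume_closedBall]
      exact ENNReal.toReal_ofReal (by positivity)
    have step3 : ∫ s in closedBall x |t - x|, ‖f s - f x‖
        = (2 * |t - x|) * ⨍ y in closedBall x |t - x|, ‖f y - f x‖ := by
      rw [setAverage_eq, smul_eq_mul, measureReal_def, hvol]
      field_simp
    calc ‖∫ s in x..t, (f s - f x)‖
        ≤ ∫ s in closedBall x |t - x|, ‖f s - f x‖ := step1.trans step2
      _ = (2 * |t - x|) * ⨍ y in closedBall x |t - x|, ‖f y - f x‖ := step3
      _ ≤ (2 * |t - x|) * (ε / 2) := by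
          apply mul_le_mul_of_nonneg_left havg2 (by positivity)
      _ = ε * ‖t - x‖ := by rw [Real.norm_eq_abs]; ring
  · rw [eventually_pure]
    simp

-- integrability of (integrable) * (continuous) on Ioc
lemma mul_cont_integrableOn {a b : ℝ} {f F : ℝ → ℝ} (hf : IntegrableOn f (Set.Ioc a b))
    (hF : Continuous F) : IntegrableOn (fun x => f x * F x) (Set.Ioc a b) := by
  obtain ⟨C, hC⟩ := (isCompact_Icc (a := a) (b := b)).exists_bound_of_continuousOn
    hF.continuousOn
  apply Integrable.mono' (hf.norm.const_mul C)
    (hf.aestronglyMeasurable.mul hF.aestronglyMeasurable)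
  filter_upwards [ae_restrict_mem measurableSet_Ioc] with s hs
  simp only [Pi.mul_apply]
  rw [norm_mul, mul_comm C ‖f s‖]
  have h1 := hC s (Set.Ioc_subset_Icc_self hs)
  have h2 : (0:ℝ) ≤ ‖f s‖ := norm_nonneg _
  calc ‖f s‖ * ‖F s‖ ≤ ‖f s‖ * C := mul_le_mul_of_nonneg_left h1 h2
    _ = ‖f s‖ * C := rfl

-- product rule for primitives, via Fubini
lemma primitive_mul (a b : ℝ) (hab : a ≤ b) (f g F G : ℝ → ℝ)
    (hf : IntegrableOn f (Set.Ioc a b)) (hg : IntegrableOn g (Set.Ioc a b))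
    (hFc : Continuous F) (hGc : Continuous G)
    (hF : ∀ t ∈ Set.Icc a b, F t = F a + ∫ s in Set.Ioc a t, f s)
    (hG : ∀ t ∈ Set.Icc a b, G t = G a + ∫ s in Set.Ioc a t, g s) :
    F b * G b = F a * G a + ∫ s in Set.Ioc a b, (f s * G s + F s * g s) := by
  set μ : Measure ℝ := volume.restrict (Set.Ioc a b) with hμ
  have hT : MeasurableSet {p : ℝ × ℝ | p.1 ≤ p.2} :=
    measurableSet_le measurable_fst measurable_snd
  have hP : Integrable (fun p : ℝ × ℝ => f p.1 * g p.2) (μ.prod μ) := Integrable.mul_prod hf hg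
  have htotal : ∫ z, (fun p : ℝ × ℝ => f p.1 * g p.2) z ∂(μ.prod μ)
      = (∫ x, f x ∂μ) * (∫ y, g y ∂μ) := integral_prod_mul f g
  have hsplit : (∫ z in {p : ℝ × ℝ | p.1 ≤ p.2}, f z.1 * g z.2 ∂(μ.prod μ))
      + (∫ z in {p : ℝ × ℝ | p.1 ≤ p.2}ᶜ, f z.1 * g z.2 ∂(μ.prod μ))
      = ∫ z, f z.1 * g z.2 ∂(μ.prod μ) := integral_add_compl hT hP
  have hTpart : (∫ z in {p : ℝ × ℝ | p.1 ≤ p.2}, f z.1 * g z.2 ∂(μ.prod μ))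
      = ∫ y in Set.Ioc a b, (F y - F a) * g y := by
    rw [← integral_indicator hT, integral_prod_symm _ (hP.indicator hT)]
    refine integral_congr_ae ?_
    filter_upwards [ae_restrict_mem measurableSet_Ioc] with y hy
    have hfun : (fun x => Set.indicator {p : ℝ × ℝ | p.1 ≤ p.2}
        (fun p => f p.1 * g p.2) (x, y))
        = Set.indicator (Set.Iic y) (fun x => f x * g y) := by
      funext x
      by_cases h : x ≤ y <;> simp [Set.indicator, h]
    rw [hfun, integral_indicator measurableSet_Iic, hμ,
      Measure.restrict_restrict measurableSet_Iic]
    have hIy : Set.Iic y ∩ Set.Ioc a b = Set.Ioc a y := by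
      ext z
      simp only [Set.mem_inter_iff, Set.mem_Iic, Set.mem_Ioc]
      exact ⟨fun ⟨h1, h2, h3⟩ => ⟨h2, h1⟩, fun ⟨h1, h2⟩ => ⟨h2, h1, h2.trans hy.2⟩⟩
    rw [hIy, integral_mul_const, hF y (Set.Ioc_subset_Icc_self hy)]
    ring
  have hCpart : (∫ z in {p : ℝ × ℝ | p.1 ≤ p.2}ᶜ, f z.1 * g z.2 ∂(μ.prod μ))
      = ∫ x in Set.Ioc a b, f x * (G x - G a) := by
    rw [← integral_indicator hT.compl, integral_prod _ (hP.indicator hT.compl)]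
    refine integral_congr_ae ?_
    filter_upwards [ae_restrict_mem measurableSet_Ioc] with x hx
    have hfun : (fun y => Set.indicator {p : ℝ × ℝ | p.1 ≤ p.2}ᶜ
        (fun p => f p.1 * g p.2) (x, y))
        = Set.indicator (Set.Iio x) (fun y => f x * g y) := by
      funext y
      by_cases h : x ≤ y <;> simp [Set.indicator, h, not_lt.mpr, lt_of_not_ge]
    rw [hfun, integral_indicator measurableSet_Iio, hμ,
      Measure.restrict_restrict measurableSet_Iio]
    have hIx : Set.Iio x ∩ Set.Ioc a b = Set.Ioo a x := by
      ext z
      simp only [Set.mem_inter_iff, Set.mem_Iio, Set.mem_Ioc, Set.mem_Ioo]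
      exact ⟨fun ⟨h1, h2, h3⟩ => ⟨h2, h1⟩, fun ⟨h1, h2⟩ => ⟨h2, h1, (h2.trans_le hx.2).le⟩⟩
    rw [hIx, ← integral_Ioc_eq_integral_Ioo, integral_const_mul,
      hG x (Set.Ioc_subset_Icc_self hx)]
    ring
  have hSf : ∫ x, f x ∂μ = F b - F a := by
    have := hF b ⟨hab, le_refl b⟩; rw [hμ]; linarith
  have hSg : ∫ y, g y ∂μ = G b - G a := by
    have := hG b ⟨hab, le_refl b⟩; rw [hμ]; linarith
  have hfG : Integrable (fun x => f x * G x) μ := mul_cont_integrableOn hf hGc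
  have hFg : Integrable (fun x => F x * g x) μ := by
    have := mul_cont_integrableOn hg hFc
    exact (by simpa [mul_comm] using this : IntegrableOn (fun x => F x * g x) (Set.Ioc a b))
  have hE1 : (F b - F a) * (G b - G a)
      = (∫ y in Set.Ioc a b, (F y - F a) * g y) + ∫ x in Set.Ioc a b, f x * (G x - G a) := by
    rw [← hSf, ← hSg, ← htotal, ← hsplit, hTpart, hCpart]
  have e2 : (∫ y in Set.Ioc a b, (F y - F a) * g y)
      = (∫ y in Set.Ioc a b, F y * g y) - F a * ∫ y in Set.Ioc a b, g y := by
    have : (fun y => (F y - F a) * g y) = fun y => F y * g y - F a * g y := by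
      funext y; ring
    rw [this, integral_sub hFg (hg.const_mul (F a)), integral_const_mul]
  have e3 : (∫ x in Set.Ioc a b, f x * (G x - G a))
      = (∫ x in Set.Ioc a b, f x * G x) - G a * ∫ x in Set.Ioc a b, f x := by
    have : (fun x => f x * (G x - G a)) = fun x => f x * G x - G a * f x := by
      funext x; ring
    rw [this, integral_sub hfG (hf.const_mul (G a)), integral_const_mul]
  have e4 : (∫ s in Set.Ioc a b, (f s * G s + F s * g s))
      = (∫ x in Set.Ioc a b, f x * G x) + ∫ y in Set.Ioc a b, F y * g y :=
    integral_add hfG hFg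
  have hSf' : ∫ x in Set.Ioc a b, f x = F b - F a := hSf
  have hSg' : ∫ y in Set.Ioc a b, g y = G b - G a := hSg
  rw [e4]
  linear_combination hE1 + e2 + e3 - F a * hSg' - G a * hSf'


/-- For the two-dimensional dissipative bilinear system
`ṙ₁ = -ξu₁²r₁ - u₁u₂r₂`, `ṙ₂ = u₁u₂r₁ - ξu₂²r₂` with controls `|uᵢ| ≤ 1` and
`x₀ = √(1 + ξ²) − ξ`, the function `t ↦ r₂² + x₀² r₁²` is nonincreasing on `[0, ∞)`
(its a.e. derivative equals `-2ξ(x₀u₁r₁ - u₂r₂)² ≤ 0`); in particular, starting from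
`(r₁, r₂)(0) = (1, 0)` one has `r₂(t)² + x₀² r₁(t)² ≤ x₀²`, hence `r₂(t) ≤ x₀` for all
`t ≥ 0`. Trajectories are absolutely continuous, encoded via the fundamental theorem of
calculus. -/
theorem two_spin_transfer_bound (ξ : ℝ) (hξ : 0 < ξ)
    (x₀ : ℝ) (hx₀ : x₀ = Real.sqrt (1 + ξ ^ 2) - ξ)
    (u₁ u₂ : ℝ → ℝ) (hu₁ : Measurable u₁) (hu₂ : Measurable u₂)
    (hub₁ : ∀ t, |u₁ t| ≤ 1) (hub₂ : ∀ t, |u₂ t| ≤ 1)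
    (r₁ r₂ : ℝ → ℝ) (hr₁ : Continuous r₁) (hr₂ : Continuous r₂)
    (h₁ : ∀ t ≥ (0 : ℝ), r₁ t = r₁ 0 +
      ∫ s in Set.Ioc (0 : ℝ) t, (-ξ * (u₁ s) ^ 2 * r₁ s - u₁ s * u₂ s * r₂ s))
    (h₂ : ∀ t ≥ (0 : ℝ), r₂ t = r₂ 0 +
      ∫ s in Set.Ioc (0 : ℝ) t, (u₁ s * u₂ s * r₁ s - ξ * (u₂ s) ^ 2 * r₂ s)) :
    AntitoneOn (fun t => (r₂ t) ^ 2 + x₀ ^ 2 * (r₁ t) ^ 2) (Set.Ici 0) ∧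
    (∀ᵐ t ∂(volume.restrict (Set.Ioi (0 : ℝ))),
      HasDerivAt (fun s => (r₂ s) ^ 2 + x₀ ^ 2 * (r₁ s) ^ 2)
        (-2 * ξ * (x₀ * u₁ t * r₁ t - u₂ t * r₂ t) ^ 2) t ∧
      -2 * ξ * (x₀ * u₁ t * r₁ t - u₂ t * r₂ t) ^ 2 ≤ 0) ∧
    (r₁ 0 = 1 → r₂ 0 = 0 → ∀ t ≥ (0 : ℝ),
      (r₂ t) ^ 2 + x₀ ^ 2 * (r₁ t) ^ 2 ≤ x₀ ^ 2 ∧ r₂ t ≤ x₀) := by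
  have hsqrt := Real.sq_sqrt (show (0:ℝ) ≤ 1 + ξ ^ 2 by positivity)
  have hsq : x₀ ^ 2 + 2 * ξ * x₀ = 1 := by
    rw [hx₀]; nlinarith [hsqrt]
  have x₀pos : 0 < x₀ := by
    rw [hx₀]
    nlinarith [hsqrt, Real.sqrt_nonneg (1 + ξ ^ 2)]
  set f₁ : ℝ → ℝ := fun s => -ξ * (u₁ s) ^ 2 * r₁ s - u₁ s * u₂ s * r₂ s with hf₁def
  set f₂ : ℝ → ℝ := fun s => u₁ s * u₂ s * r₁ s - ξ * (u₂ s) ^ 2 * r₂ s with hf₂def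
  have hm₁ : Measurable f₁ := by
    rw [hf₁def]; fun_prop
  have hm₂ : Measurable f₂ := by
    rw [hf₂def]; fun_prop
  have hab : ∀ s, |u₁ s * u₂ s| ≤ 1 := by
    intro s
    rw [abs_mul]
    exact mul_le_one₀ (hub₁ s) (abs_nonneg _) (hub₂ s)
  have hsq₁ : ∀ s, u₁ s ^ 2 ≤ 1 := by
    intro s
    nlinarith [sq_abs (u₁ s), hub₁ s, abs_nonneg (u₁ s)]
  have hsq₂ : ∀ s, u₂ s ^ 2 ≤ 1 := by
    intro s
    nlinarith [sq_abs (u₂ s), hub₂ s, abs_nonneg (u₂ s)]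
  have hA : ∀ s, |ξ * u₁ s ^ 2 * r₁ s| ≤ ξ * |r₁ s| := by
    intro s
    rw [abs_mul, abs_mul, abs_of_pos hξ, abs_of_nonneg (sq_nonneg (u₁ s))]
    nlinarith [mul_nonneg (sub_nonneg.mpr (hsq₁ s)) (abs_nonneg (r₁ s)), hξ,
      abs_nonneg (r₁ s), hsq₁ s, sq_nonneg (u₁ s)]
  have hB : ∀ s, |u₁ s * u₂ s * r₂ s| ≤ |r₂ s| := by
    intro s
    rw [abs_mul]
    nlinarith [mul_nonneg (sub_nonneg.mpr (hab s)) (abs_nonneg (r₂ s)),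
      abs_nonneg (r₂ s), abs_nonneg (u₁ s * u₂ s)]
  have hA' : ∀ s, |ξ * u₂ s ^ 2 * r₂ s| ≤ ξ * |r₂ s| := by
    intro s
    rw [abs_mul, abs_mul, abs_of_pos hξ, abs_of_nonneg (sq_nonneg (u₂ s))]
    nlinarith [mul_nonneg (sub_nonneg.mpr (hsq₂ s)) (abs_nonneg (r₂ s)), hξ,
      abs_nonneg (r₂ s), hsq₂ s, sq_nonneg (u₂ s)]
  have hB' : ∀ s, |u₁ s * u₂ s * r₁ s| ≤ |r₁ s| := by
    intro s
    rw [abs_mul]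
    nlinarith [mul_nonneg (sub_nonneg.mpr (hab s)) (abs_nonneg (r₁ s)),
      abs_nonneg (r₁ s), abs_nonneg (u₁ s * u₂ s)]
  have hb₁ : ∀ s, ‖f₁ s‖ ≤ ξ * |r₁ s| + |r₂ s| := by
    intro s
    rw [Real.norm_eq_abs]
    have e : f₁ s = (-(ξ * u₁ s ^ 2 * r₁ s)) - u₁ s * u₂ s * r₂ s := by
      rw [hf₁def]; ring
    rw [e]
    calc |(-(ξ * u₁ s ^ 2 * r₁ s)) - u₁ s * u₂ s * r₂ s|
        ≤ |(-(ξ * u₁ s ^ 2 * r₁ s))| + |u₁ s * u₂ s * r₂ s| := abs_sub _ _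
      _ ≤ ξ * |r₁ s| + |r₂ s| := by
          rw [abs_neg]; exact add_le_add (hA s) (hB s)
  have hb₂ : ∀ s, ‖f₂ s‖ ≤ |r₁ s| + ξ * |r₂ s| := by
    intro s
    rw [Real.norm_eq_abs]
    have e : f₂ s = u₁ s * u₂ s * r₁ s - ξ * u₂ s ^ 2 * r₂ s := by
      rw [hf₂def]
    rw [e]
    calc |u₁ s * u₂ s * r₁ s - ξ * u₂ s ^ 2 * r₂ s|
        ≤ |u₁ s * u₂ s * r₁ s| + |ξ * u₂ s ^ 2 * r₂ s| := abs_sub _ _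
      _ ≤ |r₁ s| + ξ * |r₂ s| := add_le_add (hB' s) (hA' s)
  have hL₁ : LocallyIntegrable f₁ volume := by
    rw [locallyIntegrable_iff]
    intro K hK
    refine Integrable.mono' (g := fun s => ξ * |r₁ s| + |r₂ s|) ?_
      hm₁.aestronglyMeasurable (ae_of_all _ hb₁)
    exact (((continuous_const.mul hr₁.abs).add hr₂.abs).continuousOn).integrableOn_compact hK
  have hL₂ : LocallyIntegrable f₂ volume := by
    rw [locallyIntegrable_iff]
    intro K hK
    refine Integrable.mono' (g := fun s => |r₁ s| + ξ * |r₂ s|) ?_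
      hm₂.aestronglyMeasurable (ae_of_all _ hb₂)
    exact ((hr₁.abs.add (continuous_const.mul  hr₂.abs)).continuousOn).integrableOn_compact hK
  have hIoc₁ : ∀ a b : ℝ, IntegrableOn f₁ (Set.Ioc a b) := fun a b =>
    (hL₁.integrableOn_isCompact isCompact_Icc).mono_set Set.Ioc_subset_Icc_self
  have hIoc₂ : ∀ a b : ℝ, IntegrableOn f₂ (Set.Ioc a b) := fun a b =>
    (hL₂.integrableOn_isCompact isCompact_Icc).mono_set Set.Ioc_subset_Icc_self
  have hdec₁ : ∀ a : ℝ, 0 ≤ a → ∀ τ, a ≤ τ → r₁ τ = r₁ a + ∫ s in Set.Ioc a τ, f₁ s := by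
    intro a ha τ haτ
    have key : ∫ s in Set.Ioc (0:ℝ) τ, f₁ s
        = (∫ s in Set.Ioc (0:ℝ) a, f₁ s) + ∫ s in Set.Ioc a τ, f₁ s := by
      rw [← Set.Ioc_union_Ioc_eq_Ioc ha haτ]
      exact setIntegral_union (Set.Ioc_disjoint_Ioc_of_le le_rfl) measurableSet_Ioc (hIoc₁ 0 a) (hIoc₁ a τ)
    have e1 := h₁ τ (ha.trans haτ)
    have e2 := h₁ a ha
    linarith [key, e1, e2]
  have hdec₂ : ∀ a : ℝ, 0 ≤ a → ∀ τ, a ≤ τ → r₂ τ = r₂ a + ∫ s in Set.Ioc a τ, f₂ s := by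
    intro a ha τ haτ
    have key : ∫ s in Set.Ioc (0:ℝ) τ, f₂ s
        = (∫ s in Set.Ioc (0:ℝ) a, f₂ s) + ∫ s in Set.Ioc a τ, f₂ s := by
      rw [← Set.Ioc_union_Ioc_eq_Ioc ha haτ]
      exact setIntegral_union (Set.Ioc_disjoint_Ioc_of_le le_rfl) measurableSet_Ioc (hIoc₂ 0 a) (hIoc₂ a τ)
    linarith [key, h₂ τ (ha.trans haτ), h₂ a ha]
  have hid : ∀ s, (f₂ s * r₂ s + r₂ s * f₂ s) + x₀ ^ 2 * (f₁ s * r₁ s + r₁ s * f₁ s)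
      = -2 * ξ * (x₀ * u₁ s * r₁ s - u₂ s * r₂ s) ^ 2 := by
    intro s
    simp only [hf₁def, hf₂def]
    linear_combination (-2 * u₁ s * u₂ s * r₁ s * r₂ s) * hsq
  have Vanti : AntitoneOn (fun t => (r₂ t) ^ 2 + x₀ ^ 2 * (r₁ t) ^ 2) (Set.Ici 0) := by
    intro p hp q hq hpq
    simp only
    have hp' : (0:ℝ) ≤ p := hp
    have P1 := primitive_mul p q hpq f₁ f₁ r₁ r₁ (hIoc₁ p q) (hIoc₁ p q) hr₁ hr₁
      (fun τ hτ => hdec₁ p hp' τ hτ.1) (fun τ hτ => hdec₁ p hp' τ hτ.1)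
    have P2 := primitive_mul p q hpq f₂ f₂ r₂ r₂ (hIoc₂ p q) (hIoc₂ p q) hr₂ hr₂
      (fun τ hτ => hdec₂ p hp' τ hτ.1) (fun τ hτ => hdec₂ p hp' τ hτ.1)
    have I₁ : IntegrableOn (fun s => f₁ s * r₁ s + r₁ s * f₁ s) (Set.Ioc p q) := by
      have h := mul_cont_integrableOn (hIoc₁ p q) hr₁
      exact h.add (h.congr (ae_of_all _ fun x => mul_comm (f₁ x) (r₁ x)))
    have I₂ : IntegrableOn (fun s => f₂ s * r₂ s + r₂ s * f₂ s) (Set.Ioc p q) := by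
      have h := mul_cont_integrableOn (hIoc₂ p q) hr₂
      exact h.add (h.congr (ae_of_all _ fun x => mul_comm (f₂ x) (r₂ x)))
    have hsum : ∫ s in Set.Ioc p q,
        ((f₂ s * r₂ s + r₂ s * f₂ s) + x₀ ^ 2 * (f₁ s * r₁ s + r₁ s * f₁ s))
        = (∫ s in Set.Ioc p q, (f₂ s * r₂ s + r₂ s * f₂ s))
          + x₀ ^ 2 * ∫ s in Set.Ioc p q, (f₁ s * r₁ s + r₁ s * f₁ s) := by
      rw [integral_add I₂ (I₁.const_mul _), integral_const_mul]
    have hnonpos : ∫ s in Set.Ioc p q,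
        ((f₂ s * r₂ s + r₂ s * f₂ s) + x₀ ^ 2 * (f₁ s * r₁ s + r₁ s * f₁ s)) ≤ 0 := by
      apply integral_nonpos
      intro s
      show (f₂ s * r₂ s + r₂ s * f₂ s) + x₀ ^ 2 * (f₁ s * r₁ s + r₁ s * f₁ s) ≤ 0
      rw [hid s]
      nlinarith [mul_nonneg hξ.le (sq_nonneg (x₀ * u₁ s * r₁ s - u₂ s * r₂ s))]
    have key : (r₂ q) ^ 2 + x₀ ^ 2 * (r₁ q) ^ 2
        = ((r₂ p) ^ 2 + x₀ ^ 2 * (r₁ p) ^ 2) + ∫ s in Set.Ioc p q,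
          ((f₂ s * r₂ s + r₂ s * f₂ s) + x₀ ^ 2 * (f₁ s * r₁ s + r₁ s * f₁ s)) := by
      linear_combination P2 + x₀ ^ 2 * P1 - hsum
    linarith [key, hnonpos]
  have hii₁ : ∀ a b : ℝ, IntervalIntegrable f₁ volume a b := fun a b =>
    (hL₁.integrableOn_isCompact isCompact_uIcc).intervalIntegrable
  have hii₂ : ∀ a b : ℝ, IntervalIntegrable f₂ volume a b := fun a b =>
    (hL₂.integrableOn_isCompact isCompact_uIcc).intervalIntegrable
  have hD : ∀ᵐ t ∂(volume.restrict (Set.Ioi (0:ℝ))),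
      HasDerivAt r₁ (f₁ t) t ∧ HasDerivAt r₂ (f₂ t) t := by
    rw [ae_restrict_iff' measurableSet_Ioi]
    filter_upwards [ae_hasDerivAt_primitive hL₁, ae_hasDerivAt_primitive hL₂]
      with x hx1 hx2 hxpos
    have hxpos' : (0:ℝ) < x := hxpos
    constructor
    · have hev : r₁ =ᶠ[𝓝 x] (fun t => r₁ x + ∫ s in x..t, f₁ s) := by
        filter_upwards [isOpen_Ioi.eventually_mem hxpos] with t ht
        have ht' : (0:ℝ) < t := ht
        have e0t : r₁ t = r₁ 0 + ∫ s in (0:ℝ)..t, f₁ s := by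
          rw [intervalIntegral.integral_of_le ht'.le]; exact h₁ t ht'.le
        have e0x : r₁ x = r₁ 0 + ∫ s in (0:ℝ)..x, f₁ s := by
          rw [intervalIntegral.integral_of_le hxpos'.le]; exact h₁ x hxpos'.le
        have hadd := intervalIntegral.integral_add_adjacent_intervals (hii₁ 0 x) (hii₁ x t)
        show r₁ t = r₁ x + ∫ s in x..t, f₁ s
        linarith [e0t, e0x, hadd]
      exact (hx1.const_add (r₁ x)).congr_of_eventuallyEq hev
    · have hev : r₂ =ᶠ[𝓝 x] (fun t => r₂ x + ∫ s in x..t, f₂ s) := by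
        filter_upwards [isOpen_Ioi.eventually_mem hxpos] with t ht
        have ht' : (0:ℝ) < t := ht
        have e0t : r₂ t = r₂ 0 + ∫ s in (0:ℝ)..t, f₂ s := by
          rw [intervalIntegral.integral_of_le ht'.le]; exact h₂ t ht'.le
        have e0x : r₂ x = r₂ 0 + ∫ s in (0:ℝ)..x, f₂ s := by
          rw [intervalIntegral.integral_of_le hxpos'.le]; exact h₂ x hxpos'.le
        have hadd := intervalIntegral.integral_add_adjacent_intervals (hii₂ 0 x) (hii₂ x t)
        show r₂ t = r₂ x + ∫ s in x..t, f₂ s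
        linarith [e0t, e0x, hadd]
      exact (hx2.const_add (r₂ x)).congr_of_eventuallyEq hev
  refine ⟨Vanti, ?_, ?_⟩
  · filter_upwards [hD] with t ht
    obtain ⟨ht1, ht2⟩ := ht
    have hnp : -2 * ξ * (x₀ * u₁ t * r₁ t - u₂ t * r₂ t) ^ 2 ≤ 0 := by
      nlinarith [mul_nonneg hξ.le (sq_nonneg (x₀ * u₁ t * r₁ t - u₂ t * r₂ t))]
    refine ⟨?_, hnp⟩
    have h := (ht2.pow 2).add ((ht1.pow 2).const_mul (x₀ ^ 2))
    refine h.congr_deriv ?_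
    norm_num
    linear_combination hid t
  · intro h10 h20 t ht
    have hmono := Vanti (Set.self_mem_Ici) (show t ∈ Set.Ici (0:ℝ) from ht) ht
    simp only at hmono
    rw [h10, h20] at hmono
    have hV0 : (0:ℝ) ^ 2 + x₀ ^ 2 * (1:ℝ) ^ 2 = x₀ ^ 2 := by ring
    rw [hV0] at hmono
    refine ⟨hmono, ?_⟩
    nlinarith [hmono, sq_nonneg (r₁ t), x₀pos, sq_nonneg (r₂ t + x₀)]
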